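/- Let (A,≻,≺) be an anti-dendriform algebra and (V, l_≻, r_≻, l_≺, r_≺) a representation. If T: V → A is an O-operator of (A,≻,≺) associated to this representation, then the operations u ≻_V v := l_≻(T(u))v + r_≻(T(v))u and u ≺_V v := l_≺(T(u))v + r_≺(T(v))u make V into an anti-dendriform algebra, and T is a homomorphism of anti-dendriform algebras from (V,≻_V,≺_V) to (A,≻,≺). -/
import Mathlib


def IsLin (k : Type*) [Field k] {V W : Type*} [AddCommGroup V] [Module k V]
    [AddCommGroup W] [Module k W] (f : V → W) : Prop :=
  ∀ (c : k) (u v : V), f (c • u + v) = c • f u + f v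

def IsBilin (k : Type*) [Field k] {U V W : Type*} [AddCommGroup U] [Module k U]
    [AddCommGroup V] [Module k V] [AddCommGroup W] [Module k W]
    (f : U → V → W) : Prop :=
  (∀ x, IsLin k (f x)) ∧ (∀ y, IsLin k (fun x => f x y))

/-- An anti-dendriform algebra structure given by two bilinear operations `s` (≻) and `p` (≺). -/
def IsADAlg (k : Type*) [Field k] {A : Type*} [AddCommGroup A] [Module k A]
    (s p : A → A → A) : Prop :=
  IsBilin k s ∧ IsBilin k p ∧
  (∀ x y z, s x (s y z) = - s (s x y + p x y) z) ∧
  (∀ x y z, s x (s y z) = - p x (s y z + p y z)) ∧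
  (∀ x y z, s x (s y z) = p (p x y) z) ∧
  (∀ x y z, p (s x y) z = s x (p y z))

/-- A representation of an anti-dendriform algebra `(A, s, p)` on `V`. -/
def IsADRep (k : Type*) [Field k] {A V : Type*} [AddCommGroup A] [Module k A]
    [AddCommGroup V] [Module k V]
    (s p : A → A → A) (ls rs lp rp : A → V → V) : Prop :=
  IsBilin k ls ∧ IsBilin k rs ∧ IsBilin k lp ∧ IsBilin k rp ∧
  (∀ x y v, ls x (ls y v) = - ls (s x y + p x y) v) ∧
  (∀ x y v, ls x (ls y v) = - lp x (ls y v + lp y v)) ∧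
  (∀ x y v, ls x (ls y v) = lp (p x y) v) ∧
  (∀ x y v, rs (s x y) v = - rs y (rs x v + rp x v)) ∧
  (∀ x y v, rs (s x y) v = - rp (s x y + p x y) v) ∧
  (∀ x y v, rs (s x y) v = rp y (rp x v)) ∧
  (∀ x y v, ls x (rs y v) = - rs y (ls x v + lp x v)) ∧
  (∀ x y v, ls x (rs y v) = - lp x (rs y v + rp y v)) ∧
  (∀ x y v, ls x (rs y v) = rp y (lp x v)) ∧
  (∀ x y v, lp (s x y) v = ls x (lp y v)) ∧
  (∀ x y v, rp y (rs x v) = rs (p x y) v) ∧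
  (∀ x y v, rp y (ls x v) = ls x (rp y v))


theorem lin_add {k : Type*} [Field k] {V W : Type*} [AddCommGroup V] [Module k V]
    [AddCommGroup W] [Module k W] {f : V → W} (hf : IsLin k f) (u v : V) :
    f (u + v) = f u + f v := by
  have := hf 1 u v; simpa using this

theorem stmt18 {k A V : Type*} [Field k] [AddCommGroup A] [Module k A]
    [AddCommGroup V] [Module k V]
    (s p : A → A → A) (ls rs lp rp : A → V → V)
    (hA : IsADAlg k s p) (h : IsADRep k s p ls rs lp rp)
    (T : V → A) (hT : IsLin k T)
    (hT1 : ∀ u v, s (T u) (T v) = T (ls (T u) v + rs (T v) u))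
    (hT2 : ∀ u v, p (T u) (T v) = T (lp (T u) v + rp (T v) u)) :
    IsADAlg k (fun u v : V => ls (T u) v + rs (T v) u)
      (fun u v : V => lp (T u) v + rp (T v) u) ∧
    (∀ u v : V, T (ls (T u) v + rs (T v) u) = s (T u) (T v)) ∧
    (∀ u v : V, T (lp (T u) v + rp (T v) u) = p (T u) (T v)) := by
  obtain ⟨hls, hrs, hlp, hrp, r1, r2, r3, r4, r5, r6, r7, r8, r9, r10, r11, r12⟩ := h
  refine ⟨⟨⟨?_, ?_⟩, ⟨?_, ?_⟩, ?_, ?_, ?_, ?_⟩,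
    fun u v => (hT1 u v).symm, fun u v => (hT2 u v).symm⟩
  · intro u c v w
    dsimp only
    have h1 : rs (c • T v + T w) u = c • rs (T v) u + rs (T w) u := hrs.2 u c (T v) (T w)
    rw [hls.1 (T u) c v w, hT c v w, h1]
    module
  · intro y c u w
    dsimp only
    have h1 : ls (c • T u + T w) y = c • ls (T u) y + ls (T w) y := hls.2 y c (T u) (T w)
    rw [hrs.1 (T y) c u w, hT c u w, h1]
    module
  · intro u c v w
    dsimp only
    have h1 : rp (c • T v + T w) u = c • rp (T v) u + rp (T w) u := hrp.2 u c (T v) (T w)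
    rw [hlp.1 (T u) c v w, hT c v w, h1]
    module
  · intro y c u w
    dsimp only
    have h1 : lp (c • T u + T w) y = c • lp (T u) y + lp (T w) y := hlp.2 y c (T u) (T w)
    rw [hrp.1 (T y) c u w, hT c u w, h1]
    module
  · intro x y z
    dsimp only
    rw [← hT1 y z, lin_add hT, ← hT1 x y, ← hT2 x y,
      lin_add (hls.1 (T x)), r1, r7, r4,
      lin_add (hrs.1 (T z)) (ls (T x) y) (lp (T x) y),
      lin_add (hrs.1 (T z)) (rs (T y) x) (rp (T y) x),
      lin_add (hrs.1 (T z)) (ls (T x) y + rs (T y) x),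
      lin_add (hrs.1 (T z)) (ls (T x) y) (rs (T y) x),
      lin_add (hrs.1 (T z)) (lp (T x) y) (rp (T y) x)]
    abel
  · intro x y z
    dsimp only
    rw [← hT1 y z, lin_add hT, ← hT1 y z, ← hT2 y z,
      lin_add (hls.1 (T x)), r2, r8, r5,
      lin_add (hlp.1 (T x)) (ls (T y) z) (lp (T y) z),
      lin_add (hlp.1 (T x)) (rs (T z) y) (rp (T z) y),
      lin_add (hlp.1 (T x)) (ls (T y) z + rs (T z) y),
      lin_add (hlp.1 (T x)) (ls (T y) z) (rs (T z) y),
      lin_add (hlp.1 (T x)) (lp (T y) z) (rp (T z) y)]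
    abel
  · intro x y z
    dsimp only
    rw [← hT1 y z, ← hT2 x y,
      lin_add (hls.1 (T x)), r3, r9, r6,
      lin_add (hrp.1 (T z)) (lp (T x) y) (rp (T y) x)]
    abel
  · intro x y z
    dsimp only
    rw [← hT1 x y, ← hT2 y z,
      lin_add (hls.1 (T x)) (lp (T y) z) (rp (T z) y),
      lin_add (hrp.1 (T z)) (ls (T x) y) (rs (T y) x),
      r10, r12, r11]
    abel
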